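/- Let C₂ > 0. The function h(γ) = (1 - e^{-C₂(1-γ)})² / (1-γ)³ is strictly increasing on the interval [0, 1). -/

import Mathlib

/-- For `C₂ > 0`, the function `h(γ) = (1 - e^{-C₂(1-γ)})² / (1-γ)³` is strictly
increasing on `[0, 1)`. -/
theorem momentum_factor_first_term_strictMono (C₂ : ℝ) (hC₂ : 0 < C₂) :
    StrictMonoOn
      (fun γ : ℝ => (1 - Real.exp (-(C₂ * (1 - γ)))) ^ 2 / (1 - γ) ^ 3)
      (Set.Ico 0 1) := by
  have key : StrictAntiOn (fun u : ℝ => (1 - Real.exp (-(C₂ * u))) ^ 2 / u ^ 3)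
      (Set.Ioi 0) := by
    apply strictAntiOn_of_deriv_neg (convex_Ioi 0)
    · apply ContinuousOn.div
      · fun_prop
      · fun_prop
      · intro x hx
        exact pow_ne_zero 3 (ne_of_gt hx)
    · intro u hu
      rw [interior_Ioi] at hu
      have hu0 : (0:ℝ) < u := hu
      set E := Real.exp (-(C₂ * u)) with hEdef
      have hA : HasDerivAt (fun u : ℝ => 1 - Real.exp (-(C₂ * u))) (C₂ * E) u := by
        have h1 : HasDerivAt (fun u : ℝ => -(C₂ * u)) (-C₂) u := by
          have := ((hasDerivAt_id u).const_mul C₂).neg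
          simp only [mul_one] at this
          exact this
        have h2 := (Real.hasDerivAt_exp (-(C₂ * u))).comp u h1
        have h3 := (hasDerivAt_const u (1:ℝ)).sub h2
        exact h3.congr_deriv (by rw [hEdef]; ring)
      have hN : HasDerivAt (fun u : ℝ => (1 - Real.exp (-(C₂ * u))) ^ 2)
          (2 * (1 - E) * (C₂ * E)) u := by
        have := hA.pow 2
        exact this.congr_deriv (by rw [hEdef]; push_cast; ring)
      have hD : HasDerivAt (fun u : ℝ => u ^ 3) (3 * u ^ 2) u := by
        simpa using hasDerivAt_pow 3 u
      have hg := hN.div hD (pow_ne_zero 3 hu0.ne')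
      have hg' : HasDerivAt (fun u : ℝ => (1 - Real.exp (-(C₂ * u))) ^ 2 / u ^ 3) _ u := hg
      rw [hg'.deriv]
      have hP : C₂ * u + 1 < Real.exp (C₂ * u) :=
        Real.add_one_lt_exp (ne_of_gt (mul_pos hC₂ hu0))
      have hPE : Real.exp (C₂ * u) * E = 1 := by
        rw [hEdef, ← Real.exp_add]; simp
      have hE0 : (0:ℝ) < E := Real.exp_pos _
      have hE1 : E < 1 := by
        rw [hEdef]
        exact Real.exp_lt_one_iff.mpr (by nlinarith)
      apply div_neg_of_neg_of_pos
      · nlinarith [mul_pos (mul_pos hu0 hu0) hE0, sq_nonneg u, sq_nonneg (1 - E),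
          mul_pos hE0 hu0, mul_pos (mul_pos hu0 hu0) (mul_pos hE0 (sub_pos.mpr hE1))]
      · positivity
  intro x hx y hy hxy
  have hxm : (1:ℝ) - x ∈ Set.Ioi (0:ℝ) := by simp; linarith [hx.2]
  have hym : (1:ℝ) - y ∈ Set.Ioi (0:ℝ) := by simp; linarith [hy.2]
  have := key hym hxm (by linarith)
  simpa using this
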